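/- Let Σ be a translating space-like graph in the Lorentz (n+1)-manifold M^n × ℝ, η a smooth compactly supported function on Σ, Θ = ⟨ν, ∂_s⟩ the angle function, and φ = ηΘ. Then div(η Θ² ∇η e^{cs}) = φ e^{cs} Lφ + Θ² |∇η|² e^{cs}, where L is the stability operator Lφ = Δφ − (|A|² + Ric̄(ν,ν))φ + c⟨∇φ, ∂_s⟩ and div is the divergence on Σ. -/
import Mathlib


open Real RealInnerProductSpace

/-- **Equation (c-14).**  Let `Σ` be a translating space-like graph in the Lorentz
`(n+1)`-manifold `M^n × ℝ`, `η` a smooth compactly supported function on `Σ`,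
`Θ = ⟨ν, ∂ₛ⟩` the angle function and `φ = ηΘ`.  Then
`div(ηΘ²∇η e^{cs}) = φ e^{cs} Lφ + Θ²|∇η|² e^{cs}`,
where `L` is the stability operator `Lφ = Δφ - (|A|² + Ric̄(ν,ν))φ + c⟨∇φ, ∂ₛ⟩` and
`div` is the divergence on `Σ`.

The graph `Σ` is modelled by its carrier `S` with height function `hgt`, angle
function `Θ`, `Asq = |A|²` and `Ric = Ric̄(ν,ν)`; tangent vectors of `Σ` are
modelled by a real inner product space `V`, with gradient `grad`, divergence `divg`,
Laplacian `lap` and `sT` the tangential part of `∂ₛ` along `Σ` (so that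
`⟨∇φ, ∂ₛ⟩ = ⟪∇φ, sT⟫`).  The hypotheses record the calculus rules on `Σ` (Leibniz
rules for `div` and `grad`, additivity of `div`, `Δ = div ∘ grad`,
`∇e^{cs} = c e^{cs} sT`) and that `Σ` is translating, via the identity `LΘ = 0` of
equation (c-12). -/
theorem divergence_identity_c14
    {S : Type*} [TopologicalSpace S]
    {V : Type*} [NormedAddCommGroup V] [InnerProductSpace ℝ V]
    (n : ℕ) (hn : 2 ≤ n) (c : ℝ)
    (hgt Θ Asq Ric : S → ℝ)
    (η : S → ℝ) (hη : HasCompactSupport η)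
    (φ : S → ℝ) (hφ : ∀ p, φ p = η p * Θ p)
    (grad : (S → ℝ) → S → V)
    (divg : (S → V) → S → ℝ)
    (lap : (S → ℝ) → S → ℝ)
    (sT : S → V)
    (L : (S → ℝ) → S → ℝ)
    -- the stability operator, with `⟨∇ψ, ∂ₛ⟩ = ⟪∇ψ, sT⟫`
    (hL : ∀ ψ p, L ψ p = lap ψ p - (Asq p + Ric p) * ψ p + c * ⟪grad ψ p, sT p⟫)
    -- calculus rules on `Σ`
    (hdiv_smul : ∀ (f : S → ℝ) (X : S → V) (p : S),
        divg (fun q => f q • X q) p = ⟪grad f p, X p⟫ + f p * divg X p)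
    (hdiv_add : ∀ (X Y : S → V) (p : S),
        divg (fun q => X q + Y q) p = divg X p + divg Y p)
    (hlap : ∀ (f : S → ℝ) (p : S), divg (grad f) p = lap f p)
    (hgrad_mul : ∀ (f g : S → ℝ) (p : S),
        grad (fun q => f q * g q) p = f p • grad g p + g p • grad f p)
    (hgrad_exp : ∀ p, grad (fun q => exp (c * hgt q)) p = (c * exp (c * hgt p)) • sT p)
    -- `Σ` is a translating space-like graph: `LΘ = 0` (equation (c-12))
    (hLΘ : ∀ p, L Θ p = 0) :
    ∀ p, divg (fun q => (η q * (Θ q) ^ 2 * exp (c * hgt q)) • grad η q) p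
      = φ p * exp (c * hgt p) * L φ p
        + (Θ p) ^ 2 * ⟪grad η p, grad η p⟫ * exp (c * hgt p) := by
  intro p
  have hφf : φ = fun q => η q * Θ q := funext hφ
  have hΘsq : (fun q => Θ q ^ 2) = fun q => Θ q * Θ q := by funext q; ring
  have hgradφ : ∀ r, grad φ r = η r • grad Θ r + Θ r • grad η r := by
    intro r; rw [hφf]; exact hgrad_mul η Θ r
  have hlapΘ : ∀ r, lap Θ r = (Asq r + Ric r) * Θ r - c * ⟪grad Θ r, sT r⟫ := by
    intro r; have h := hLΘ r; rw [hL] at h; linarith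
  have hlapφ : lap φ p = ⟪grad η p, grad Θ p⟫ + η p * lap Θ p
      + (⟪grad Θ p, grad η p⟫ + Θ p * lap η p) := by
    rw [← hlap]
    have h1 : grad φ = fun q => η q • grad Θ q + Θ q • grad η q := funext hgradφ
    rw [h1, hdiv_add, hdiv_smul, hdiv_smul, hlap, hlap]
  have hgradΘ2 : grad (fun q => Θ q ^ 2) p = Θ p • grad Θ p + Θ p • grad Θ p := by
    rw [hΘsq]; exact hgrad_mul Θ Θ p
  have hgradf : grad (fun q => η q * Θ q ^ 2 * exp (c * hgt q)) p
      = (η p * Θ p ^ 2) • ((c * exp (c * hgt p)) • sT p)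
        + exp (c * hgt p) • (η p • (Θ p • grad Θ p + Θ p • grad Θ p)
            + Θ p ^ 2 • grad η p) := by
    rw [hgrad_mul (fun q => η q * Θ q ^ 2) (fun q => exp (c * hgt q)) p, hgrad_exp,
      hgrad_mul η (fun q => Θ q ^ 2) p, hgradΘ2]
  rw [hdiv_smul (fun q => η q * Θ q ^ 2 * exp (c * hgt q)) (grad η) p, hgradf, hlap,
    hL, hlapφ, hlapΘ, hgradφ, hφ]
  simp only [inner_add_left, inner_smul_left, real_inner_comm (sT p) (grad η p),
    real_inner_comm (grad Θ p) (grad η p), RCLike.inner_apply, conj_trivial]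
  ring
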